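/- Let (Ω, P, π) be a finite irreducible reversible Markov chain, and x, y ∈ Ω, s, t ≥ 0. If d_x(t) + d_y(s) ≤ 1, where d_x(t) := ‖P^t(x,·) - π‖_TV, then P^{s+t}(x,y)/π(y) ≥ (1 - d_x(t) - d_y(s))². -/
import Mathlib


open Finset

/-- For a finite irreducible reversible Markov chain, if
`d_x(t) + d_y(s) ≤ 1` (with `d_x(t)` the TV distance of the time-`t` distribution
started at `x` from `π`), then `P^{s+t}(x,y)/π(y) ≥ (1 - d_x(t) - d_y(s))²`. -/
theorem stmt1 {Ω : Type*} [Fintype Ω] [Nonempty Ω] [DecidableEq Ω]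
    (P : Matrix Ω Ω ℝ) (π : Ω → ℝ)
    (hP0 : ∀ x y, 0 ≤ P x y) (hP1 : ∀ x, ∑ y, P x y = 1)
    (hπ0 : ∀ x, 0 < π x) (hπ1 : ∑ x, π x = 1)
    (hrev : ∀ x y, π x * P x y = π y * P y x)
    (hirr : ∀ x y, ∃ t : ℕ, 0 < (P ^ t) x y)
    (x y : Ω) (s t : ℕ)
    (hsum : (1 / 2) * (∑ u, |(P ^ t) x u - π u|) +
            (1 / 2) * (∑ u, |(P ^ s) y u - π u|) ≤ 1) :
    (P ^ (s + t)) x y / π y ≥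
      (1 - (1 / 2) * (∑ u, |(P ^ t) x u - π u|) -
           (1 / 2) * (∑ u, |(P ^ s) y u - π u|)) ^ 2 := by
  -- nonnegativity of powers
  have hpow0 : ∀ (n : ℕ) (a b : Ω), 0 ≤ (P ^ n) a b := by
    intro n
    induction n with
    | zero =>
      intro a b
      rw [pow_zero, Matrix.one_apply]
      split <;> norm_num
    | succ n ih =>
      intro a b
      rw [pow_succ, Matrix.mul_apply]
      exact Finset.sum_nonneg fun k _ => mul_nonneg (ih a k) (hP0 k b)
  -- row sums of powers
  have hrow : ∀ (n : ℕ) (a : Ω), ∑ u, (P ^ n) a u = 1 := by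
    intro n
    induction n with
    | zero => intro a; simp [Matrix.one_apply]
    | succ n ih =>
      intro a
      simp only [pow_succ, Matrix.mul_apply]
      rw [Finset.sum_comm]
      calc ∑ k, ∑ u, (P ^ n) a k * P k u
          = ∑ k, (P ^ n) a k * ∑ u, P k u := by simp [Finset.mul_sum]
        _ = 1 := by simp only [hP1, mul_one]; exact ih a
  -- reversibility of powers
  have hrevn : ∀ (n : ℕ) (a b : Ω), π a * (P ^ n) a b = π b * (P ^ n) b a := by
    intro n
    induction n with
    | zero =>
      intro a b
      rcases eq_or_ne a b with h | h
      · subst h; rfl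
      · simp [Matrix.one_apply, h, Ne.symm h]
    | succ n ih =>
      intro a b
      conv_lhs => rw [pow_succ]
      conv_rhs => rw [pow_succ']
      rw [Matrix.mul_apply, Matrix.mul_apply, Finset.mul_sum, Finset.mul_sum]
      refine Finset.sum_congr rfl fun k _ => ?_
      have h1 := ih a k
      have h2 := hrev k b
      linear_combination P k b * h1 + (P ^ n) k a * h2
  set d1 : ℝ := (1 / 2) * (∑ u, |(P ^ t) x u - π u|) with hd1
  set d2 : ℝ := (1 / 2) * (∑ u, |(P ^ s) y u - π u|) with hd2
  -- min expression of TV distance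
  have habs : ∀ (f : Ω → ℝ) (u : Ω),
      |f u - π u| = f u + π u - 2 * min (f u) (π u) := by
    intro f u
    rcases le_total (f u) (π u) with h | h
    · rw [abs_of_nonpos (by linarith), min_eq_left h]; ring
    · rw [abs_of_nonneg (by linarith), min_eq_right h]; ring
  have hmin_sum : ∀ (f : Ω → ℝ), (∑ u, f u = 1) →
      ∑ u, min (f u) (π u) = 1 - (1 / 2) * (∑ u, |f u - π u|) := by
    intro f hf
    have : ∑ u, |f u - π u| = (∑ u, f u) + (∑ u, π u) - 2 * ∑ u, min (f u) (π u) := by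
      rw [← Finset.sum_add_distrib, Finset.mul_sum, ← Finset.sum_sub_distrib]
      exact Finset.sum_congr rfl fun u _ => habs f u
    rw [this, hf, hπ1]; ring
  have hmin1 : ∑ u, min ((P ^ t) x u) (π u) = 1 - d1 := by
    rw [hd1]; exact hmin_sum _ (hrow t x)
  have hmin2 : ∑ u, min ((P ^ s) y u) (π u) = 1 - d2 := by
    rw [hd2]; exact hmin_sum _ (hrow s y)
  -- key identity
  have hkey : (P ^ (s + t)) x y = π y * ∑ u, (P ^ t) x u * (P ^ s) y u / π u := by
    rw [add_comm, pow_add, Matrix.mul_apply, Finset.mul_sum]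
    refine Finset.sum_congr rfl fun u _ => ?_
    have h := hrevn s u y
    have hu : (π u : ℝ) ≠ 0 := (hπ0 u).ne'
    field_simp
    linear_combination (P ^ t) x u * h
  -- Cauchy–Schwarz
  have hS0 : ∀ u, 0 ≤ (P ^ t) x u * (P ^ s) y u / π u := fun u =>
    div_nonneg (mul_nonneg (hpow0 t x u) (hpow0 s y u)) (hπ0 u).le
  have hCS : (∑ u, Real.sqrt ((P ^ t) x u * (P ^ s) y u)) ^ 2
      ≤ ∑ u, (P ^ t) x u * (P ^ s) y u / π u := by
    have h := Finset.sum_mul_sq_le_sq_mul_sq Finset.univ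
      (fun u => Real.sqrt ((P ^ t) x u * (P ^ s) y u / π u))
      (fun u => Real.sqrt (π u))
    have e1 : ∀ u : Ω, Real.sqrt ((P ^ t) x u * (P ^ s) y u / π u) * Real.sqrt (π u)
        = Real.sqrt ((P ^ t) x u * (P ^ s) y u) := by
      intro u
      rw [← Real.sqrt_mul (hS0 u), div_mul_cancel₀ _ (hπ0 u).ne']
    have e2 : ∀ u : Ω, Real.sqrt ((P ^ t) x u * (P ^ s) y u / π u) ^ 2
        = (P ^ t) x u * (P ^ s) y u / π u := fun u => Real.sq_sqrt (hS0 u)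
    have e3 : ∀ u : Ω, Real.sqrt (π u) ^ 2 = π u := fun u => Real.sq_sqrt (hπ0 u).le
    simp only [e1, e2, e3, hπ1, mul_one] at h
    exact h
  -- min ≤ sqrt of product
  have hmle : ∀ u, min ((P ^ t) x u) ((P ^ s) y u)
      ≤ Real.sqrt ((P ^ t) x u * (P ^ s) y u) := by
    intro u
    have h0 : 0 ≤ min ((P ^ t) x u) ((P ^ s) y u) :=
      le_min (hpow0 t x u) (hpow0 s y u)
    rw [Real.le_sqrt h0 (mul_nonneg (hpow0 t x u) (hpow0 s y u))]
    calc min ((P ^ t) x u) ((P ^ s) y u) ^ 2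
        = min ((P ^ t) x u) ((P ^ s) y u) * min ((P ^ t) x u) ((P ^ s) y u) := sq _
      _ ≤ (P ^ t) x u * (P ^ s) y u :=
          mul_le_mul (min_le_left _ _) (min_le_right _ _) h0 (hpow0 t x u)
  -- pointwise lower bound for min
  have hmin_lb : ∀ u : Ω, min ((P ^ t) x u) (π u) + min ((P ^ s) y u) (π u) - π u
      ≤ min ((P ^ t) x u) ((P ^ s) y u) := by
    intro u
    refine le_min ?_ ?_
    · have h1 := min_le_left ((P ^ t) x u) (π u)
      have h2 := min_le_right ((P ^ s) y u) (π u)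
      linarith
    · have h1 := min_le_right ((P ^ t) x u) (π u)
      have h2 := min_le_left ((P ^ s) y u) (π u)
      linarith
  have hM : 1 - d1 - d2 ≤ ∑ u, min ((P ^ t) x u) ((P ^ s) y u) := by
    have h := Finset.sum_le_sum (fun u (_ : u ∈ Finset.univ) => hmin_lb u)
    rw [Finset.sum_sub_distrib, Finset.sum_add_distrib, hmin1, hmin2, hπ1] at h
    linarith
  have hM0 : 0 ≤ 1 - d1 - d2 := by linarith
  have hsum0 : 0 ≤ ∑ u, min ((P ^ t) x u) ((P ^ s) y u) := le_trans hM0 hM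
  have hsq1 : (1 - d1 - d2) ^ 2 ≤ (∑ u, min ((P ^ t) x u) ((P ^ s) y u)) ^ 2 :=
    pow_le_pow_left₀ hM0 hM 2
  have hsq2 : (∑ u, min ((P ^ t) x u) ((P ^ s) y u)) ^ 2
      ≤ (∑ u, Real.sqrt ((P ^ t) x u * (P ^ s) y u)) ^ 2 :=
    pow_le_pow_left₀ hsum0 (Finset.sum_le_sum fun u _ => hmle u) 2
  rw [ge_iff_le, hkey, mul_comm, mul_div_assoc, div_self (hπ0 y).ne', mul_one]
  linarith
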